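/- arXiv:1511.08895 — 2 statements merged into one kernel-verified Lean document; each statement's English description precedes it below -/
import Mathlib

section
/- Let x be a random vector in R^p with E[‖x‖₂³] < ∞, and let φ'' : R → R be Lipschitz continuous with constant L. Then for any β̂, β* ∈ R^p, ‖ E[xxᵀφ''(⟨x,β̂⟩)] − E[ xxᵀ ∫₀¹ φ''(⟨x, β* + ξ(β̂ − β*)⟩)dξ ] ‖₂ ≤ (L·E[‖x‖₂³]/2)·‖β̂ − β*‖₂. In particular, if x is supported on a ball of radius √K then the right-hand side is at most (L K^{3/2}/2)‖β̂ − β*‖₂, and if x is sub-gaussian with norm K then it is at most (L·6^{1.5}K³p^{1.5}/2)‖β̂ − β*‖₂. -/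
open MeasureTheory Matrix
open scoped RealInnerProductSpace ENNReal

set_option maxHeartbeats 1000000

noncomputable section

/-- Spectral (`ℓ₂` operator) norm of a matrix. -/
def specNorm {p : ℕ} (A : Matrix (Fin p) (Fin p) ℝ) : ℝ :=
  ‖Matrix.toEuclideanCLM (𝕜 := ℝ) A‖

lemma coord_abs_le_norm {p : ℕ} (v : EuclideanSpace ℝ (Fin p)) (i : Fin p) : |v i| ≤ ‖v‖ := by
  have := abs_real_inner_le_norm v (EuclideanSpace.single i 1)
  simpa [EuclideanSpace.inner_single_right] using this

lemma sq_le_one_add_cube {n : ℝ} (hn : 0 ≤ n) : n ^ 2 ≤ 1 + n ^ 3 := by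
  nlinarith [mul_nonneg hn (sq_nonneg (n - 1)), sq_nonneg (2*n - 1)]

lemma cube_helper {C0 L n B : ℝ} (hC0 : 0 ≤ C0) (hL : 0 ≤ L) (hn : 0 ≤ n) (hB : 0 ≤ B) :
    n * n * (C0 + L * (n * B)) ≤ (C0 + L * B) * (1 + n ^ 3) := by
  have h2 : n ^ 2 ≤ 1 + n ^ 3 := sq_le_one_add_cube hn
  nlinarith [mul_le_mul_of_nonneg_left h2 hC0, mul_nonneg (mul_nonneg hL hB) (pow_nonneg hn 3),
    mul_nonneg hL hB]


lemma cube_norm_le {p : ℕ} (v : EuclideanSpace ℝ (Fin p)) :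
    ‖v‖ ^ 3 ≤ Real.sqrt p * ∑ i, |v i| ^ 3 := by
  have hnorm : ‖v‖ ^ 2 = ∑ i, (v i) ^ 2 := by
    rw [EuclideanSpace.norm_eq, Real.sq_sqrt (by positivity)]
    simp [sq_abs]
  have hs3 : (0:ℝ) ≤ ∑ i, |v i| ^ 3 := by positivity
  have cs1 : (∑ i, (v i)^2) ^ 2 ≤ (∑ i, |v i|) * (∑ i, |v i| ^ 3) := by
    have h := Finset.sum_mul_sq_le_sq_mul_sq Finset.univ
      (fun i => Real.sqrt |v i|) (fun i => Real.sqrt |v i| * |v i|)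
    have e1 : ∀ i : Fin p, Real.sqrt |v i| * (Real.sqrt |v i| * |v i|) = (v i)^2 := by
      intro i
      rw [← mul_assoc, Real.mul_self_sqrt (abs_nonneg _), ← sq_abs]
      ring
    have e2 : ∀ i : Fin p, Real.sqrt |v i| ^ 2 = |v i| := fun i => Real.sq_sqrt (abs_nonneg _)
    have e3 : ∀ i : Fin p, (Real.sqrt |v i| * |v i|) ^ 2 = |v i| ^ 3 := by
      intro i
      rw [mul_pow, Real.sq_sqrt (abs_nonneg _)]
      ring
    calc (∑ i, (v i)^2) ^ 2
        = (∑ i, Real.sqrt |v i| * (Real.sqrt |v i| * |v i|)) ^ 2 := by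
          congr 1; exact Finset.sum_congr rfl fun i _ => (e1 i).symm
      _ ≤ (∑ i, Real.sqrt |v i| ^ 2) * (∑ i, (Real.sqrt |v i| * |v i|) ^ 2) := h
      _ = (∑ i, |v i|) * (∑ i, |v i| ^ 3) := by
          congr 1
          · exact Finset.sum_congr rfl fun i _ => e2 i
          · exact Finset.sum_congr rfl fun i _ => e3 i
  have cs2 : (∑ i, |v i|) ^ 2 ≤ (p : ℝ) * ∑ i, (v i)^2 := by
    have h := Finset.sum_mul_sq_le_sq_mul_sq Finset.univ (fun _ : Fin p => (1:ℝ)) (fun i => |v i|)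
    simpa [sq_abs, Finset.card_univ] using h
  have h1 : ∑ i, |v i| ≤ Real.sqrt p * ‖v‖ := by
    have h := Real.sqrt_le_sqrt cs2
    rwa [Real.sqrt_sq (by positivity), Real.sqrt_mul (by positivity), ← hnorm,
      Real.sqrt_sq (norm_nonneg v)] at h
  have key : ‖v‖ ^ 4 ≤ (Real.sqrt p * ‖v‖) * ∑ i, |v i| ^ 3 := by
    have : ‖v‖ ^ 4 = (∑ i, (v i)^2) ^ 2 := by rw [← hnorm]; ring
    rw [this]
    calc (∑ i, (v i)^2) ^ 2 ≤ (∑ i, |v i|) * (∑ i, |v i| ^ 3) := cs1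
      _ ≤ (Real.sqrt p * ‖v‖) * ∑ i, |v i| ^ 3 := by
          apply mul_le_mul_of_nonneg_right h1 hs3
  rcases eq_or_lt_of_le (norm_nonneg v) with h0 | h0
  · rw [← h0]; simp; positivity
  · have := key
    nlinarith [Real.sqrt_nonneg (p:ℝ)]


lemma part2_aux (p : ℕ) (μ : Measure (EuclideanSpace ℝ (Fin p))) [IsProbabilityMeasure μ]
    (hmom : Integrable (fun v => ‖v‖ ^ 3) μ) (K : ℝ) (hK : 0 < K)
    (hball : ∀ᵐ v ∂μ, ‖v‖ ≤ Real.sqrt K) : (∫ v, ‖v‖^3 ∂μ) ≤ K ^ ((3:ℝ)/2) := by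
  have h1 : ∀ᵐ v ∂μ, ‖v‖^3 ≤ Real.sqrt K ^ 3 :=
    hball.mono fun v h => pow_le_pow_left₀ (norm_nonneg v) h 3
  calc ∫ v, ‖v‖^3 ∂μ ≤ ∫ _v, Real.sqrt K ^ 3 ∂μ := integral_mono_ae hmom (integrable_const _) h1
    _ = Real.sqrt K ^ 3 := by simp
    _ = K ^ ((3:ℝ)/2) := by
        rw [Real.sqrt_eq_rpow, ← Real.rpow_natCast (K ^ ((1:ℝ)/2)) 3, ← Real.rpow_mul hK.le]
        norm_num


lemma part3_aux (p : ℕ) (μ : Measure (EuclideanSpace ℝ (Fin p))) [IsProbabilityMeasure μ]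
    (hmom : Integrable (fun v => ‖v‖ ^ 3) μ) (K : ℝ) (hK : 0 < K)
    (hsub : ∀ w : EuclideanSpace ℝ (Fin p), ‖w‖ = 1 → ∀ m : ℕ, 1 ≤ m →
        (∫ v, |⟪v, w⟫| ^ m ∂μ) ^ ((m : ℝ)⁻¹) ≤ K * Real.sqrt m) :
    (∫ v, ‖v‖^3 ∂μ) ≤ (6:ℝ) ^ ((1.5:ℝ)) * K ^ 3 * (p:ℝ) ^ ((1.5:ℝ)) := by
  rcases Nat.eq_zero_or_pos p with hp | hp
  · subst hp
    have hz : (fun v : EuclideanSpace ℝ (Fin 0) => ‖v‖ ^ 3) = fun _ => (0:ℝ) := by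
      funext v
      have : v = 0 := Subsingleton.elim v 0
      simp [this]
    rw [hz]
    simp
    positivity
  · have hcoord : ∀ i : Fin p, Continuous fun v : EuclideanSpace ℝ (Fin p) => v i := by
      intro i
      exact (continuous_apply i).comp (PiLp.continuous_ofLp 2 fun _ : Fin p => ℝ)
    have hint_i : ∀ i : Fin p, Integrable (fun v => |v i| ^ 3) μ := by
      intro i
      refine hmom.mono' ((((hcoord i).abs).pow 3).aestronglyMeasurable) (ae_of_all _ fun v => ?_)
      rw [Real.norm_eq_abs, abs_of_nonneg (by positivity)]
      exact pow_le_pow_left₀ (abs_nonneg _) (coord_abs_le_norm v i) 3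
    have hmomi : ∀ i : Fin p, (∫ v, |v i| ^ 3 ∂μ) ≤ (K * Real.sqrt 3) ^ 3 := by
      intro i
      have hw : ‖(EuclideanSpace.single i (1:ℝ))‖ = 1 := by
        simp [EuclideanSpace.norm_single]
      have h := hsub _ hw 3 (by norm_num)
      have heq : (fun v : EuclideanSpace ℝ (Fin p) =>
          |⟪v, EuclideanSpace.single i (1:ℝ)⟫| ^ 3) = fun v => |v i| ^ 3 := by
        funext v
        rw [EuclideanSpace.inner_single_right]
        norm_num
      rw [show (((3:ℕ) : ℝ))⁻¹ = ((3:ℝ))⁻¹ by norm_num,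
        show Real.sqrt ((3:ℕ):ℝ) = Real.sqrt 3 by norm_num] at h
      rw [heq] at h
      have hX0 : 0 ≤ ∫ v, |v i| ^ 3 ∂μ := integral_nonneg fun v => by positivity
      have h3 : (∫ v, |v i| ^ 3 ∂μ) = ((∫ v, |v i| ^ 3 ∂μ) ^ ((3:ℝ)⁻¹)) ^ (3:ℕ) := by
        rw [← Real.rpow_natCast ((∫ v, |v i| ^ 3 ∂μ) ^ ((3:ℝ)⁻¹)) 3, ← Real.rpow_mul hX0]
        norm_num
      rw [h3]
      exact pow_le_pow_left₀ (Real.rpow_nonneg hX0 _) h 3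
    calc ∫ v, ‖v‖^3 ∂μ
        ≤ ∫ v, Real.sqrt p * ∑ i, |v i| ^ 3 ∂μ :=
          integral_mono hmom ((integrable_finset_sum _ fun i _ => hint_i i).const_mul _)
            (fun v => cube_norm_le v)
      _ = Real.sqrt p * ∑ i, ∫ v, |v i| ^ 3 ∂μ := by
          rw [integral_const_mul, integral_finset_sum _ (fun i _ => hint_i i)]
      _ ≤ Real.sqrt p * (p * (K * Real.sqrt 3) ^ 3) := by
          refine mul_le_mul_of_nonneg_left ?_ (Real.sqrt_nonneg _)
          have h := Finset.sum_le_card_nsmul Finset.univ _ ((K * Real.sqrt 3) ^ 3)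
            (fun i _ => hmomi i)
          simpa [Finset.card_univ, nsmul_eq_mul] using h
      _ ≤ (6:ℝ) ^ ((1.5:ℝ)) * K ^ 3 * (p:ℝ) ^ ((1.5:ℝ)) := by
          have h6 : (3:ℝ) ^ ((1.5:ℝ)) ≤ (6:ℝ) ^ ((1.5:ℝ)) :=
            Real.rpow_le_rpow (by norm_num) (by norm_num) (by norm_num)
          have hs3 : Real.sqrt 3 ^ 3 = (3:ℝ) ^ ((1.5:ℝ)) := by
            rw [Real.sqrt_eq_rpow, ← Real.rpow_natCast ((3:ℝ) ^ ((1:ℝ)/2)) 3,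
              ← Real.rpow_mul (by norm_num)]
            norm_num
          have hppos : (0:ℝ) < p := by exact_mod_cast hp
          have hp15 : Real.sqrt p * p = (p:ℝ) ^ ((1.5:ℝ)) := by
            rw [Real.sqrt_eq_rpow, show ((1.5:ℝ)) = 1/2 + 1 by norm_num,
              Real.rpow_add hppos, Real.rpow_one]
          calc Real.sqrt p * ((p:ℝ) * (K * Real.sqrt 3)^3)
              = (Real.sqrt p * p) * (K^3 * Real.sqrt 3 ^ 3) := by ring
            _ = (p:ℝ)^((1.5:ℝ)) * (K^3 * (3:ℝ)^((1.5:ℝ))) := by rw [hp15, hs3]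
            _ ≤ (6:ℝ)^((1.5:ℝ)) * K^3 * (p:ℝ)^((1.5:ℝ)) := by
                have hnn : (0:ℝ) ≤ (p:ℝ)^((1.5:ℝ)) * K^3 :=
                  mul_nonneg (Real.rpow_nonneg (le_of_lt hppos) _) (pow_nonneg hK.le 3)
                nlinarith [mul_le_mul_of_nonneg_left h6 hnn]

/-- **Lemma (smoothness of the averaged Hessian).** If `x` (law `μ`) has
`E[‖x‖₂³] < ∞` and `φ''` is `L`-Lipschitz, then for any `β̂, β*`,
`‖E[xxᵀφ''(⟨x,β̂⟩)] − E[xxᵀ∫₀¹φ''(⟨x, β*+ξ(β̂−β*)⟩)dξ]‖₂ ≤ (L·E[‖x‖₂³]/2)‖β̂−β*‖₂`;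
in particular the right-hand side is at most `(LK^{3/2}/2)‖β̂−β*‖₂` when `x` is supported
on a ball of radius `√K`, and at most `(L·6^{1.5}K³p^{1.5}/2)‖β̂−β*‖₂` when `x` is
sub-gaussian with norm `K`. -/
theorem averaged_hessian_lipschitz_bound (p : ℕ)
    (μ : Measure (EuclideanSpace ℝ (Fin p))) [IsProbabilityMeasure μ]
    (φ : ℝ → ℝ) (hφ : ContDiff ℝ 2 φ) (L : ℝ) (hL : 0 < L)
    (hlip : LipschitzWith (Real.toNNReal L) (iteratedDeriv 2 φ))
    (hmom : Integrable (fun v => ‖v‖ ^ 3) μ) :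
    ∀ βh βs : EuclideanSpace ℝ (Fin p),
      specNorm
          ((Matrix.of fun i j => ∫ v, v i * v j * iteratedDeriv 2 φ ⟪v, βh⟫ ∂μ) -
            (Matrix.of fun i j => ∫ v, v i * v j *
              (∫ ξ in (0:ℝ)..1, iteratedDeriv 2 φ ⟪v, βs + ξ • (βh - βs)⟫) ∂μ)) ≤
        L * (∫ v, ‖v‖ ^ 3 ∂μ) / 2 * ‖βh - βs‖ ∧
      (∀ K : ℝ, 0 < K → (∀ᵐ v ∂μ, ‖v‖ ≤ Real.sqrt K) →
        L * (∫ v, ‖v‖ ^ 3 ∂μ) / 2 * ‖βh - βs‖ ≤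
          L * K ^ ((3:ℝ)/2) / 2 * ‖βh - βs‖) ∧
      (∀ K : ℝ, 0 < K →
        (∀ w : EuclideanSpace ℝ (Fin p), ‖w‖ = 1 →
          ∀ m : ℕ, 1 ≤ m →
            (∫ v, |⟪v, w⟫| ^ m ∂μ) ^ ((m : ℝ)⁻¹) ≤ K * Real.sqrt m) →
        L * (∫ v, ‖v‖ ^ 3 ∂μ) / 2 * ‖βh - βs‖ ≤
          L * (6 : ℝ) ^ ((1.5 : ℝ)) * K ^ 3 * (p : ℝ) ^ ((1.5 : ℝ)) / 2 *
            ‖βh - βs‖) := by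
  intro βh βs
  refine ⟨?_, ?_, ?_⟩
  · show specNorm _ ≤ _
    set D := iteratedDeriv 2 φ with hD
    set Δ := βh - βs with hΔdef
    set C0 := |D 0| with hC0
    have hC0nn : 0 ≤ C0 := abs_nonneg _
    have hDcont : Continuous D := hlip.continuous
    have hlipR : ∀ a b : ℝ, |D a - D b| ≤ L * |a - b| := by
      intro a b
      have h := hlip.dist_le_mul a b
      rwa [Real.dist_eq, Real.dist_eq, Real.coe_toNNReal _ hL.le] at h
    have hgrow : ∀ t : ℝ, |D t| ≤ C0 + L * |t| := by
      intro t
      have h := hlipR t 0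
      simp only [sub_zero] at h
      calc |D t| ≤ |D t - D 0| + |D 0| := by
            have := abs_sub_abs_le_abs_sub (D t) (D 0); linarith [abs_add_le (D t - D 0) (D 0),
              abs_sub_abs_le_abs_sub (D t) (D 0)]
        _ ≤ C0 + L * |t| := by rw [hC0]; linarith
    -- coordinate continuity
    have hcoord : ∀ i : Fin p, Continuous fun v : EuclideanSpace ℝ (Fin p) => v i := by
      intro i
      exact (continuous_apply i).comp (PiLp.continuous_ofLp 2 fun _ : Fin p => ℝ)
    set f1 : EuclideanSpace ℝ (Fin p) → ℝ := fun v => D ⟪v, βh⟫ with hf1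
    set f2 : EuclideanSpace ℝ (Fin p) → ℝ := fun v => ∫ ξ in (0:ℝ)..1, D ⟪v, βs + ξ • Δ⟫ with hf2
    have hf1cont : Continuous f1 := hDcont.comp (continuous_id.inner continuous_const)
    have hf2cont : Continuous f2 := by
      apply intervalIntegral.continuous_parametric_intervalIntegral_of_continuous'
      exact hDcont.comp (continuous_fst.inner
        (continuous_const.add (continuous_snd.smul continuous_const)))
    -- pointwise bound on f1 - f2
    have hg : ∀ v, |f1 v - f2 v| ≤ L / 2 * (‖v‖ * ‖Δ‖) := by
      intro v
      have hcξ : Continuous fun ξ : ℝ => D ⟪v, βs + ξ • Δ⟫ :=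
        hDcont.comp (continuous_const.inner (continuous_const.add
          (continuous_id.smul continuous_const)))
      have hii : IntervalIntegrable (fun ξ : ℝ => D ⟪v, βs + ξ • Δ⟫) volume 0 1 :=
        hcξ.intervalIntegrable 0 1
      have heq : f1 v - f2 v = ∫ ξ in (0:ℝ)..1, (D ⟪v, βh⟫ - D ⟪v, βs + ξ • Δ⟫) := by
        rw [intervalIntegral.integral_sub intervalIntegrable_const hii,
          intervalIntegral.integral_const]
        simp only [sub_zero, one_smul]
        rfl
      rw [heq]
      have hptb : ∀ ξ ∈ Set.uIcc (0:ℝ) 1,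
          |D ⟪v, βh⟫ - D ⟪v, βs + ξ • Δ⟫| ≤ L * ((1 - ξ) * |⟪v, Δ⟫|) := by
        intro ξ hξ
        rw [Set.uIcc_of_le (by norm_num)] at hξ
        have hsub : ⟪v, βh⟫ - ⟪v, βs + ξ • Δ⟫ = (1 - ξ) * ⟪v, Δ⟫ := by
          have hb : βh - (βs + ξ • Δ) = (1 - ξ) • Δ := by
            rw [hΔdef]; module
          rw [← inner_sub_right, hb, real_inner_smul_right]
        calc |D ⟪v, βh⟫ - D ⟪v, βs + ξ • Δ⟫| ≤ L * |⟪v, βh⟫ - ⟪v, βs + ξ • Δ⟫| := hlipR _ _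
          _ = L * ((1 - ξ) * |⟪v, Δ⟫|) := by
              rw [hsub, abs_mul, abs_of_nonneg (by linarith [hξ.2] : (0:ℝ) ≤ 1 - ξ)]
      calc |∫ ξ in (0:ℝ)..1, (D ⟪v, βh⟫ - D ⟪v, βs + ξ • Δ⟫)|
          ≤ ∫ ξ in (0:ℝ)..1, L * ((1 - ξ) * |⟪v, Δ⟫|) := by
            refine le_trans (intervalIntegral.abs_integral_le_integral_abs (by norm_num)) ?_
            apply intervalIntegral.integral_mono_on (by norm_num)
            · exact (intervalIntegrable_const.sub hii).abs
            · exact (Continuous.intervalIntegrable (by continuity) 0 1)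
            · intro ξ hξ
              exact hptb ξ (by rw [Set.uIcc_of_le (by norm_num)]; exact hξ)
        _ = L * |⟪v, Δ⟫| * (1/2) := by
            rw [intervalIntegral.integral_const_mul]
            have h1 : (∫ ξ in (0:ℝ)..1, (1 - ξ) * |⟪v, Δ⟫|) = (∫ ξ in (0:ℝ)..1, (1 - ξ)) * |⟪v, Δ⟫| := by
              rw [← intervalIntegral.integral_mul_const]
            have h2 : (∫ ξ in (0:ℝ)..1, (1 - ξ : ℝ)) = 1/2 := by
              have hid : IntervalIntegrable (fun ξ : ℝ => ξ) volume 0 1 :=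
                (continuous_id' : Continuous fun ξ : ℝ => ξ).intervalIntegrable 0 1
              rw [intervalIntegral.integral_sub intervalIntegrable_const hid]
              simp [integral_id]
              norm_num
            rw [h1, h2]; ring
        _ ≤ L / 2 * (‖v‖ * ‖Δ‖) := by
            have := abs_real_inner_le_norm v Δ
            nlinarith [abs_nonneg ⟪v, Δ⟫, norm_nonneg v, norm_nonneg Δ]
    -- integrability
    have hmom2 : Integrable (fun v : EuclideanSpace ℝ (Fin p) => 1 + ‖v‖ ^ 3) μ :=
      (integrable_const 1).add hmom
    have hf1bd : ∀ v, |f1 v| ≤ C0 + L * (‖v‖ * ‖βh‖) := by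
      intro v
      refine (hgrow _).trans ?_
      have := abs_real_inner_le_norm v βh
      nlinarith [hL.le]
    have hf2bd : ∀ v, |f2 v| ≤ C0 + L * (‖v‖ * (‖βs‖ + ‖Δ‖)) := by
      intro v
      have h := intervalIntegral.norm_integral_le_of_norm_le_const
        (C := C0 + L * (‖v‖ * (‖βs‖ + ‖Δ‖)))
        (f := fun ξ : ℝ => D ⟪v, βs + ξ • Δ⟫) (a := 0) (b := 1) ?_
      · simpa [hf2] using h
      · intro ξ hξ
        rw [Set.uIoc_of_le (by norm_num)] at hξ
        have h1 := hgrow ⟪v, βs + ξ • Δ⟫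
        have h2 : |⟪v, βs + ξ • Δ⟫| ≤ ‖v‖ * (‖βs‖ + ‖Δ‖) := by
          refine (abs_real_inner_le_norm _ _).trans ?_
          have hb : ‖βs + ξ • Δ‖ ≤ ‖βs‖ + ‖Δ‖ := by
            refine (norm_add_le _ _).trans ?_
            have hs : ‖ξ • Δ‖ = |ξ| * ‖Δ‖ := by rw [norm_smul, Real.norm_eq_abs]
            have : |ξ| ≤ 1 := by rw [abs_of_pos hξ.1]; exact hξ.2
            nlinarith [norm_nonneg Δ]
          exact mul_le_mul_of_nonneg_left hb (norm_nonneg v)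
        rw [Real.norm_eq_abs]
        nlinarith [hL.le]
    have hint1 : ∀ i j : Fin p,
        Integrable (fun v : EuclideanSpace ℝ (Fin p) => v i * v j * D ⟪v, βh⟫) μ := by
      intro i j
      have hcont : Continuous fun v : EuclideanSpace ℝ (Fin p) => v i * v j * D ⟪v, βh⟫ :=
        ((hcoord i).mul (hcoord j)).mul hf1cont
      refine (hmom2.const_mul (C0 + L * ‖βh‖)).mono' hcont.aestronglyMeasurable ?_
      refine ae_of_all _ fun v => ?_
      have h1 : |D ⟪v, βh⟫| ≤ C0 + L * (‖v‖ * ‖βh‖) := hf1bd v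
      have h2 : ‖v‖ ^ 2 ≤ 1 + ‖v‖ ^ 3 := sq_le_one_add_cube (norm_nonneg v)
      have h3 := coord_abs_le_norm v i
      have h4 := coord_abs_le_norm v j
      have h5 : ‖v i * v j * D ⟪v, βh⟫‖ = |v i| * |v j| * |D ⟪v, βh⟫| := by
        rw [Real.norm_eq_abs, abs_mul, abs_mul]
      rw [h5]
      have h6 : |v i| * |v j| * |D ⟪v, βh⟫| ≤ ‖v‖ * ‖v‖ * (C0 + L * (‖v‖ * ‖βh‖)) := by
        have hnn : 0 ≤ C0 + L * (‖v‖ * ‖βh‖) := by positivity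
        exact mul_le_mul (mul_le_mul h3 h4 (abs_nonneg _) (norm_nonneg _)) h1 (abs_nonneg _)
          (by positivity)
      exact h6.trans (cube_helper hC0nn hL.le (norm_nonneg v) (norm_nonneg βh))
    have hint2 : ∀ i j : Fin p,
        Integrable (fun v : EuclideanSpace ℝ (Fin p) =>
          v i * v j * (∫ ξ in (0:ℝ)..1, D ⟪v, βs + ξ • Δ⟫)) μ := by
      intro i j
      have hcont : Continuous fun v : EuclideanSpace ℝ (Fin p) =>
          v i * v j * (∫ ξ in (0:ℝ)..1, D ⟪v, βs + ξ • Δ⟫) :=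
        ((hcoord i).mul (hcoord j)).mul hf2cont
      refine (hmom2.const_mul (C0 + L * (‖βs‖ + ‖Δ‖))).mono' hcont.aestronglyMeasurable ?_
      refine ae_of_all _ fun v => ?_
      have h1 : |f2 v| ≤ C0 + L * (‖v‖ * (‖βs‖ + ‖Δ‖)) := hf2bd v
      have h2 : ‖v‖ ^ 2 ≤ 1 + ‖v‖ ^ 3 := sq_le_one_add_cube (norm_nonneg v)
      have h3 := coord_abs_le_norm v i
      have h4 := coord_abs_le_norm v j
      have h5 : ‖v i * v j * f2 v‖ = |v i| * |v j| * |f2 v| := by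
        rw [Real.norm_eq_abs, abs_mul, abs_mul]
      show ‖v i * v j * f2 v‖ ≤ _
      rw [h5]
      have h6 : |v i| * |v j| * |f2 v| ≤ ‖v‖ * ‖v‖ * (C0 + L * (‖v‖ * (‖βs‖ + ‖Δ‖))) := by
        have hnn : 0 ≤ C0 + L * (‖v‖ * (‖βs‖ + ‖Δ‖)) := by positivity
        exact mul_le_mul (mul_le_mul h3 h4 (abs_nonneg _) (norm_nonneg _)) h1 (abs_nonneg _)
          (by positivity)
      exact h6.trans (cube_helper hC0nn hL.le (norm_nonneg v) (by positivity))
    have hintg : ∀ i j : Fin p,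
        Integrable (fun v : EuclideanSpace ℝ (Fin p) =>
          v i * v j * (D ⟪v, βh⟫ - ∫ ξ in (0:ℝ)..1, D ⟪v, βs + ξ • Δ⟫)) μ := by
      intro i j
      exact ((hint1 i j).sub (hint2 i j)).congr (ae_of_all _ fun v => by simp only [Pi.sub_apply]; ring)
    have hI3 : 0 ≤ ∫ v, ‖v‖ ^ 3 ∂μ := integral_nonneg fun v => by positivity
    set Md := ((Matrix.of fun i j => ∫ v, v i * v j * D ⟪v, βh⟫ ∂μ) -
        (Matrix.of fun i j => ∫ v, v i * v j *
          (∫ ξ in (0:ℝ)..1, D ⟪v, βs + ξ • Δ⟫) ∂μ)) with hMd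
    have hentry : ∀ i j : Fin p, Md i j =
        ∫ v, v i * v j * (D ⟪v, βh⟫ - ∫ ξ in (0:ℝ)..1, D ⟪v, βs + ξ • Δ⟫) ∂μ := by
      intro i j
      rw [hMd]
      simp only [Matrix.sub_apply, Matrix.of_apply]
      rw [← integral_sub (hint1 i j) (hint2 i j)]
      refine integral_congr_ae (ae_of_all _ fun v => by ring)
    rw [specNorm]
    refine ContinuousLinearMap.opNorm_le_bound _ ?_ ?_
    · exact mul_nonneg (div_nonneg (mul_nonneg hL.le hI3) (by norm_num)) (norm_nonneg _)
    intro w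
    have happ : ∀ i : Fin p, (Matrix.toEuclideanCLM (𝕜 := ℝ) Md w) i = ∑ j, Md i j * w j :=
      fun _ => rfl
    have hkey : ∀ u : EuclideanSpace ℝ (Fin p),
        ⟪u, Matrix.toEuclideanCLM (𝕜 := ℝ) Md w⟫ ≤
          ‖u‖ * ‖w‖ * (L / 2 * ‖Δ‖) * (∫ v, ‖v‖ ^ 3 ∂μ) := by
      intro u
      have hconst : ∀ (i j : Fin p) (c : ℝ),
          c * (∫ v, v i * v j * (D ⟪v, βh⟫ - ∫ ξ in (0:ℝ)..1, D ⟪v, βs + ξ • Δ⟫) ∂μ) =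
          ∫ v, c * (v i * v j * (D ⟪v, βh⟫ - ∫ ξ in (0:ℝ)..1, D ⟪v, βs + ξ • Δ⟫)) ∂μ := by
        intro i j c
        rw [integral_const_mul]
      have hstep : ⟪u, Matrix.toEuclideanCLM (𝕜 := ℝ) Md w⟫ =
          ∫ v, (∑ i, u i * v i) * (∑ j, w j * v j) *
            (D ⟪v, βh⟫ - ∫ ξ in (0:ℝ)..1, D ⟪v, βs + ξ • Δ⟫) ∂μ := by
        calc ⟪u, Matrix.toEuclideanCLM (𝕜 := ℝ) Md w⟫
            = ∑ i, u i * (Matrix.toEuclideanCLM (𝕜 := ℝ) Md w) i := by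
              simp [PiLp.inner_apply]
              exact Finset.sum_congr rfl fun i _ => mul_comm _ _
          _ = ∑ i, ∑ j, (u i * w j) * Md i j := by
              refine Finset.sum_congr rfl fun i _ => ?_
              rw [happ i, Finset.mul_sum]
              exact Finset.sum_congr rfl fun j _ => by ring
          _ = ∑ i, ∑ j, ∫ v, (u i * w j) *
                (v i * v j * (D ⟪v, βh⟫ - ∫ ξ in (0:ℝ)..1, D ⟪v, βs + ξ • Δ⟫)) ∂μ := by
              refine Finset.sum_congr rfl fun i _ => Finset.sum_congr rfl fun j _ => ?_
              rw [hentry i j, hconst i j]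
          _ = ∑ i, ∫ v, ∑ j, (u i * w j) *
                (v i * v j * (D ⟪v, βh⟫ - ∫ ξ in (0:ℝ)..1, D ⟪v, βs + ξ • Δ⟫)) ∂μ := by
              exact Finset.sum_congr rfl fun i _ =>
                (integral_finset_sum _ fun j _ => (hintg i j).const_mul _).symm
          _ = ∫ v, ∑ i, ∑ j, (u i * w j) *
                (v i * v j * (D ⟪v, βh⟫ - ∫ ξ in (0:ℝ)..1, D ⟪v, βs + ξ • Δ⟫)) ∂μ := by
              exact (integral_finset_sum _ fun i _ =>
                integrable_finset_sum _ fun j _ => (hintg i j).const_mul _).symm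
          _ = ∫ v, (∑ i, u i * v i) * (∑ j, w j * v j) *
                (D ⟪v, βh⟫ - ∫ ξ in (0:ℝ)..1, D ⟪v, βs + ξ • Δ⟫) ∂μ := by
              refine integral_congr_ae (ae_of_all _ fun v => ?_)
              simp only [Finset.sum_mul, Finset.mul_sum]
              rw [Finset.sum_comm]
              refine Finset.sum_congr rfl fun i _ => ?_
              refine Finset.sum_congr rfl fun j _ => by ring
      rw [hstep]
      have hptw : ∀ v : EuclideanSpace ℝ (Fin p),
          ‖(∑ i, u i * v i) * (∑ j, w j * v j) *
            (D ⟪v, βh⟫ - ∫ ξ in (0:ℝ)..1, D ⟪v, βs + ξ • Δ⟫)‖ ≤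
          (‖u‖ * ‖w‖ * (L / 2 * ‖Δ‖)) * ‖v‖ ^ 3 := by
        intro v
        have e1 : (∑ i, u i * v i) = ⟪u, v⟫ := by simp [PiLp.inner_apply]; exact Finset.sum_congr rfl fun i _ => mul_comm _ _
        have e2 : (∑ j, w j * v j) = ⟪w, v⟫ := by simp [PiLp.inner_apply]; exact Finset.sum_congr rfl fun i _ => mul_comm _ _
        rw [e1, e2, Real.norm_eq_abs, abs_mul, abs_mul]
        have b1 := abs_real_inner_le_norm u v
        have b2 := abs_real_inner_le_norm w v
        have b3 : |D ⟪v, βh⟫ - ∫ ξ in (0:ℝ)..1, D ⟪v, βs + ξ • Δ⟫| ≤ L / 2 * (‖v‖ * ‖Δ‖) := hg v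
        calc |⟪u, v⟫| * |⟪w, v⟫| * |D ⟪v, βh⟫ - ∫ ξ in (0:ℝ)..1, D ⟪v, βs + ξ • Δ⟫|
            ≤ (‖u‖ * ‖v‖) * (‖w‖ * ‖v‖) * (L / 2 * (‖v‖ * ‖Δ‖)) := by
              refine mul_le_mul (mul_le_mul b1 b2 (abs_nonneg _) (by positivity)) b3
                (abs_nonneg _) (by positivity)
          _ = (‖u‖ * ‖w‖ * (L / 2 * ‖Δ‖)) * ‖v‖ ^ 3 := by ring
      calc (∫ v, (∑ i, u i * v i) * (∑ j, w j * v j) *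
              (D ⟪v, βh⟫ - ∫ ξ in (0:ℝ)..1, D ⟪v, βs + ξ • Δ⟫) ∂μ)
          ≤ ‖∫ v, (∑ i, u i * v i) * (∑ j, w j * v j) *
              (D ⟪v, βh⟫ - ∫ ξ in (0:ℝ)..1, D ⟪v, βs + ξ • Δ⟫) ∂μ‖ := le_abs_self _
        _ ≤ ∫ v, (‖u‖ * ‖w‖ * (L / 2 * ‖Δ‖)) * ‖v‖ ^ 3 ∂μ :=
            norm_integral_le_of_norm_le (hmom.const_mul _) (ae_of_all _ hptw)
        _ = ‖u‖ * ‖w‖ * (L / 2 * ‖Δ‖) * (∫ v, ‖v‖ ^ 3 ∂μ) := integral_const_mul _ _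
    set y := Matrix.toEuclideanCLM (𝕜 := ℝ) Md w with hy
    rcases eq_or_ne y 0 with h0 | h0
    · rw [h0]
      simp only [norm_zero]
      exact mul_nonneg (mul_nonneg (div_nonneg (mul_nonneg hL.le hI3) (by norm_num))
        (norm_nonneg _)) (norm_nonneg _)
    · have hk := hkey y
      rw [real_inner_self_eq_norm_sq] at hk
      have hyp : 0 < ‖y‖ := norm_pos_iff.mpr h0
      nlinarith [hk, hyp]
  · intro K hK hball
    have h := part2_aux p μ hmom K hK hball
    gcongr
  · intro K hK hsub
    have h := part3_aux p μ hmom K hK hsub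
    calc L * (∫ v, ‖v‖ ^ 3 ∂μ) / 2 * ‖βh - βs‖
        ≤ L * ((6:ℝ) ^ ((1.5:ℝ)) * K ^ 3 * (p:ℝ) ^ ((1.5:ℝ))) / 2 * ‖βh - βs‖ := by gcongr
      _ = L * (6 : ℝ) ^ ((1.5 : ℝ)) * K ^ 3 * (p : ℝ) ^ ((1.5 : ℝ)) / 2 * ‖βh - βs‖ := by ring

end
end

section
/- For all positive constants c₁ and c₂, ∫_{c₁}^∞ e^{−c₂ t^{2/3}} dt ≤ ( 3c₁^{1/3}/(2c₂) + 3/(4c₂² c₁^{1/3}) ) · e^{−c₂ c₁^{2/3}}. -/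
open MeasureTheory Filter Set Topology

noncomputable section

namespace TailBound

variable (c₂ : ℝ)

/-- antiderivative candidate (negated): `g = -F`. -/
def g (t : ℝ) : ℝ :=
  -((3 / (2 * c₂) * t ^ ((1:ℝ)/3) + 3 / (4 * c₂ ^ 2) * t ^ (-(1:ℝ)/3)) *
    Real.exp (-(c₂ * t ^ ((2:ℝ)/3))))

def g' (t : ℝ) : ℝ :=
  (1 + 1 / (4 * c₂ ^ 2) * t ^ (-(4:ℝ)/3)) * Real.exp (-(c₂ * t ^ ((2:ℝ)/3)))

lemma hasDerivAt_g (h₂ : 0 < c₂) {t : ℝ} (ht : 0 < t) :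
    HasDerivAt (g c₂) (g' c₂ t) t := by
  have hne : t ≠ 0 := ht.ne'
  have d13 : HasDerivAt (fun x : ℝ => x ^ ((1:ℝ)/3)) ((1/3) * t ^ ((1:ℝ)/3 - 1)) t :=
    Real.hasDerivAt_rpow_const (Or.inl hne)
  have dm13 : HasDerivAt (fun x : ℝ => x ^ (-(1:ℝ)/3)) ((-(1:ℝ)/3) * t ^ (-(1:ℝ)/3 - 1)) t :=
    Real.hasDerivAt_rpow_const (Or.inl hne)
  have d23 : HasDerivAt (fun x : ℝ => x ^ ((2:ℝ)/3)) ((2/3) * t ^ ((2:ℝ)/3 - 1)) t :=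
    Real.hasDerivAt_rpow_const (Or.inl hne)
  have dE : HasDerivAt (fun x : ℝ => Real.exp (-(c₂ * x ^ ((2:ℝ)/3))))
      (Real.exp (-(c₂ * t ^ ((2:ℝ)/3))) * (-(c₂ * ((2/3) * t ^ ((2:ℝ)/3 - 1))))) t := by
    exact (Real.hasDerivAt_exp _).comp t ((d23.const_mul c₂).neg)
  have dA : HasDerivAt (fun x : ℝ =>
      3 / (2 * c₂) * x ^ ((1:ℝ)/3) + 3 / (4 * c₂ ^ 2) * x ^ (-(1:ℝ)/3))
      (3 / (2 * c₂) * ((1/3) * t ^ ((1:ℝ)/3 - 1)) +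
        3 / (4 * c₂ ^ 2) * ((-(1:ℝ)/3) * t ^ (-(1:ℝ)/3 - 1))) t :=
    (d13.const_mul _).add (dm13.const_mul _)
  have := ((dA.mul dE).neg)
  convert this using 1
  case e'_4 => rfl
  case e'_5 => rfl
  case e'_8 => rfl
  have e1 : t ^ ((1:ℝ)/3 - 1) = t ^ (-(2:ℝ)/3) := by norm_num
  have e2 : t ^ (-(1:ℝ)/3 - 1) = t ^ (-(4:ℝ)/3) := by norm_num
  have e3 : t ^ ((2:ℝ)/3 - 1) = t ^ (-(1:ℝ)/3) := by norm_num
  have m1 : t ^ ((1:ℝ)/3) * t ^ (-(1:ℝ)/3) = 1 := by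
    rw [← Real.rpow_add ht]; norm_num
  have m2 : t ^ (-(1:ℝ)/3) * t ^ (-(1:ℝ)/3) = t ^ (-(2:ℝ)/3) := by
    rw [← Real.rpow_add ht]; norm_num
  rw [g', e1, e2, e3]
  have hc : c₂ * c₂⁻¹ = 1 := mul_inv_cancel₀ h₂.ne'
  linear_combination (-Real.exp (-(c₂ * t ^ ((2:ℝ)/3)))) * m1 -
    Real.exp (-(c₂ * t ^ ((2:ℝ)/3))) / (2 * c₂) * m2 +
    (-(Real.exp (-(c₂ * t ^ ((2:ℝ)/3))) * (t ^ (-(1:ℝ)/3) * t ^ ((1:ℝ)/3))) -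
      c₂⁻¹/2 * Real.exp (-(c₂ * t ^ ((2:ℝ)/3))) * (t ^ (-(1:ℝ)/3) * t ^ (-(1:ℝ)/3))) * hc

lemma tendsto_g (h₂ : 0 < c₂) : Tendsto (g c₂) atTop (𝓝 0) := by
  have hE : Tendsto (fun t : ℝ => Real.exp (-(c₂ * t ^ ((2:ℝ)/3)))) atTop (𝓝 0) := by
    apply Real.tendsto_exp_atBot.comp
    apply Filter.tendsto_neg_atTop_atBot.comp
    exact (Filter.Tendsto.const_mul_atTop h₂ (tendsto_rpow_atTop (by norm_num)))
  have h1 : Tendsto (fun t : ℝ => t ^ ((1:ℝ)/3) * Real.exp (-(c₂ * t ^ ((2:ℝ)/3))))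
      atTop (𝓝 0) := by
    have base : Tendsto (fun u : ℝ => u ^ ((1:ℝ)/2) * Real.exp (-c₂ * u)) atTop (𝓝 0) :=
      tendsto_rpow_mul_exp_neg_mul_atTop_nhds_zero _ _ h₂
    have comp := base.comp (tendsto_rpow_atTop (show (0:ℝ) < 2/3 by norm_num))
    refine comp.congr' ?_
    filter_upwards [eventually_ge_atTop (0:ℝ)] with t ht
    simp only [Function.comp]
    rw [← Real.rpow_mul ht]
    norm_num [neg_mul]
  have h2' : Tendsto (fun t : ℝ => t ^ (-(1:ℝ)/3) * Real.exp (-(c₂ * t ^ ((2:ℝ)/3))))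
      atTop (𝓝 0) := by
    have hr : Tendsto (fun t : ℝ => t ^ (-(1:ℝ)/3)) atTop (𝓝 0) := by
      rw [show (-(1:ℝ)/3) = -(1/3) by norm_num]
      exact tendsto_rpow_neg_atTop (by norm_num)
    have := hr.mul hE
    simpa using this
  have : Tendsto (fun t : ℝ =>
      -(3 / (2 * c₂) * (t ^ ((1:ℝ)/3) * Real.exp (-(c₂ * t ^ ((2:ℝ)/3)))) +
        3 / (4 * c₂ ^ 2) * (t ^ (-(1:ℝ)/3) * Real.exp (-(c₂ * t ^ ((2:ℝ)/3))))))
      atTop (𝓝 (-(3 / (2 * c₂) * 0 + 3 / (4 * c₂ ^ 2) * 0))) :=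
    ((h1.const_mul _).add (h2'.const_mul _)).neg
  simp only [mul_zero, add_zero, neg_zero] at this
  refine this.congr fun t => ?_
  simp [g]; ring

end TailBound

open TailBound

/-- For all positive constants `c₁, c₂`,
`∫_{c₁}^∞ e^{−c₂ t^{2/3}} dt ≤ (3c₁^{1/3}/(2c₂) + 3/(4c₂²c₁^{1/3})) · e^{−c₂ c₁^{2/3}}`. -/
theorem integral_exp_rpow_tail_bound (c₁ c₂ : ℝ) (h₁ : 0 < c₁) (h₂ : 0 < c₂) :
    ∫ t in Set.Ioi c₁, Real.exp (-(c₂ * t ^ ((2:ℝ)/3))) ≤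
      (3 * c₁ ^ ((1:ℝ)/3) / (2 * c₂) + 3 / (4 * c₂ ^ 2 * c₁ ^ ((1:ℝ)/3))) *
        Real.exp (-(c₂ * c₁ ^ ((2:ℝ)/3))) := by
  have hderiv : ∀ x ∈ Set.Ici c₁, HasDerivAt (g c₂) (g' c₂ x) x :=
    fun x hx => hasDerivAt_g c₂ h₂ (h₁.trans_le hx)
  have hpos : ∀ x ∈ Set.Ioi c₁, 0 ≤ g' c₂ x := by
    intro x hx
    have hxpos : (0:ℝ) < x := h₁.trans hx
    have := Real.rpow_nonneg hxpos.le (-(4:ℝ)/3)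
    have hE := (Real.exp_pos (-(c₂ * x ^ ((2:ℝ)/3)))).le
    apply mul_nonneg _ hE
    positivity
  have hInt : IntegrableOn (g' c₂) (Set.Ioi c₁) :=
    integrableOn_Ioi_deriv_of_nonneg' hderiv hpos (tendsto_g c₂ h₂)
  have hEq : ∫ x in Set.Ioi c₁, g' c₂ x = 0 - g c₂ c₁ :=
    integral_Ioi_of_hasDerivAt_of_nonneg' hderiv hpos (tendsto_g c₂ h₂)
  have hle : ∀ x ∈ Set.Ioi c₁, Real.exp (-(c₂ * x ^ ((2:ℝ)/3))) ≤ g' c₂ x := by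
    intro x hx
    have hxpos : (0:ℝ) < x := h₁.trans hx
    have h4 : (0:ℝ) ≤ 1 / (4 * c₂ ^ 2) * x ^ (-(4:ℝ)/3) := by positivity
    have hE := (Real.exp_pos (-(c₂ * x ^ ((2:ℝ)/3)))).le
    unfold g'
    nlinarith [Real.exp_pos (-(c₂ * x ^ ((2:ℝ)/3)))]
  have hmeas : AEStronglyMeasurable (fun t : ℝ => Real.exp (-(c₂ * t ^ ((2:ℝ)/3))))
      (volume.restrict (Set.Ioi c₁)) := by
    exact (Real.continuous_exp.comp
      ((continuous_const.mul (Real.continuous_rpow_const (by norm_num))).neg)).aestronglyMeasurable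
  have hfint : IntegrableOn (fun t : ℝ => Real.exp (-(c₂ * t ^ ((2:ℝ)/3)))) (Set.Ioi c₁) := by
    refine hInt.mono' hmeas ?_
    filter_upwards [ae_restrict_mem measurableSet_Ioi] with x hx
    rw [Real.norm_eq_abs, abs_of_pos (Real.exp_pos _)]
    exact hle x hx
  calc ∫ t in Set.Ioi c₁, Real.exp (-(c₂ * t ^ ((2:ℝ)/3)))
      ≤ ∫ t in Set.Ioi c₁, g' c₂ t :=
        setIntegral_mono_on hfint hInt measurableSet_Ioi hle
    _ = 0 - g c₂ c₁ := hEq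
    _ = (3 * c₁ ^ ((1:ℝ)/3) / (2 * c₂) + 3 / (4 * c₂ ^ 2 * c₁ ^ ((1:ℝ)/3))) *
        Real.exp (-(c₂ * c₁ ^ ((2:ℝ)/3))) := by
        have hrp : (0:ℝ) < c₁ ^ ((1:ℝ)/3) := Real.rpow_pos_of_pos h₁ _
        unfold g
        rw [show (-(1:ℝ)/3) = -((1:ℝ)/3) by norm_num, Real.rpow_neg h₁.le]
        field_simp
        try ring

end
end
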